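/- Let A be a totally unimodular m×n integer matrix and b ∈ ℤ^m such that the polyhedron Q := {x ∈ ℝ^n : A x ≤ b} is nonempty. Let k be a positive integer and let z* ∈ ℤ^n satisfy A z* ≤ k·b. Then there exist t ≥ 1, affinely independent integer vectors z₁, …, z_t ∈ Q, and positive integers μ₁, …, μ_t with μ₁ + ⋯ + μ_t = k, such that z* = μ₁ z₁ + ⋯ + μ_t z_t and each z_i is sign-consistent with z*, i.e. for every coordinate j ∈ {1,…,n}: if z*(j) ≥ 0 then z_i(j) ≥ 0 for all i ∈ {1,…,t}, and if z*(j) ≤ 0 then z_i(j) ≤ 0 for all i ∈ {1,…,t}. -/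

import Mathlib

namespace GRaux

open Matrix Finset
open scoped Classical

noncomputable section


variable {m n : ℕ}

def Drow (A : Matrix (Fin m) (Fin n) ℤ) : (Fin m ⊕ Fin n) → Fin n → ℤ :=
  Sum.elim (fun i => A i) (fun j j' => if j = j' then 1 else 0)

def dotZ (v w : Fin n → ℤ) : ℤ := ∑ j, v j * w j

def dotR (v : Fin n → ℤ) (x : Fin n → ℝ) : ℝ := ∑ j, (v j : ℝ) * x j

def TUhyp (A : Matrix (Fin m) (Fin n) ℤ) : Prop :=
  ∀ (r : ℕ) (φ : Fin r → (Fin m ⊕ Fin n)) (ψ : Fin r → Fin n),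
    Function.Injective φ → Function.Injective ψ →
    (Matrix.of fun i j => Drow A (φ i) (ψ j)).det = 0 ∨
    (Matrix.of fun i j => Drow A (φ i) (ψ j)).det = 1 ∨
    (Matrix.of fun i j => Drow A (φ i) (ψ j)).det = -1

lemma tuhyp_of_hTU (A : Matrix (Fin m) (Fin n) ℤ)
    (hTU : ∀ (r : ℕ) (φ : Fin r → Fin m) (ψ : Fin r → Fin n),
      Function.Injective φ → Function.Injective ψ →
      (A.submatrix φ ψ).det = 0 ∨ (A.submatrix φ ψ).det = 1 ∨
        (A.submatrix φ ψ).det = -1) : TUhyp A := by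
  have hA : A.IsTotallyUnimodular := by
    intro k f g hf hg
    rcases hTU k f g hf hg with h | h | h
    · exact ⟨0, by simp [h]⟩
    · exact ⟨1, by simp [h]⟩
    · exact ⟨-1, by simp [h]⟩
  have hD : (Matrix.fromRows A (1 : Matrix (Fin n) (Fin n) ℤ)).IsTotallyUnimodular :=
    hA.fromRows_one
  intro r φ ψ hφ hψ
  have hEq : (Matrix.of fun i j => Drow A (φ i) (ψ j)) =
      (Matrix.fromRows A (1 : Matrix (Fin n) (Fin n) ℤ)).submatrix φ ψ := by
    ext i j
    rcases h : φ i with a | a <;> simp [Drow, Matrix.one_apply, h, Matrix.submatrix_apply]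
  rw [hEq]
  rcases hD r φ ψ hφ hψ with ⟨s, hs⟩
  rcases s with _ | _ | _
  · left; rw [← hs]; rfl
  · right; right; rw [← hs]; rfl
  · right; left; rw [← hs]; rfl


lemma integral_of_tight (A : Matrix (Fin m) (Fin n) ℤ) (hTU : TUhyp A)
    (T : Set (Fin m ⊕ Fin n)) (x : Fin n → ℝ) (c : (Fin m ⊕ Fin n) → ℤ)
    (hker : ∀ d : Fin n → ℝ, (∀ r ∈ T, dotR (Drow A r) d = 0) → d = 0)
    (hval : ∀ r ∈ T, dotR (Drow A r) x = (c r : ℝ)) :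
    ∃ v : Fin n → ℤ, ∀ j, x j = (v j : ℝ) := by
  classical
  set E := EuclideanSpace ℝ (Fin n) with hE
  set g : (Fin m ⊕ Fin n) → E := fun r => WithLp.toLp 2 (fun j => ((Drow A r j : ℤ) : ℝ)) with hg
  set W := Submodule.span ℝ (g '' T) with hWdef
  have hW : W = ⊤ := by
    by_contra hW
    have hne : Wᗮ ≠ ⊥ := by
      rw [Ne, Submodule.orthogonal_eq_bot_iff]
      exact hW
    obtain ⟨d, hdW, hd0⟩ := Submodule.ne_bot_iff _ |>.mp hne
    have hdz : ∀ r ∈ T, dotR (Drow A r) d = 0 := by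
      intro r hr
      have hgr : g r ∈ W := Submodule.subset_span (Set.mem_image_of_mem g hr)
      have := (Submodule.mem_orthogonal _ _).mp hdW (g r) hgr
      have h' : ∑ j, inner ℝ ((g r) j) (d j) = 0 := this
      simpa [RCLike.inner_apply, dotR, g, mul_comm] using h'
    exact hd0 (by simpa using congrArg (WithLp.toLp 2) (hker d hdz))
  obtain ⟨s, hs_sub, hs_span, hs_li⟩ := exists_linearIndependent ℝ (g '' T)
  haveI : Fintype s := (hs_li.setFinite).fintype
  have hspan_top : ⊤ ≤ Submodule.span ℝ (Set.range ((↑) : s → E)) := by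
    rw [Subtype.range_coe, hs_span, ← hWdef, hW]
  let B : Module.Basis s ℝ E := Module.Basis.mk hs_li hspan_top
  have hcard : Fintype.card s = n := by
    have h1 := Module.finrank_eq_card_basis B
    rw [finrank_euclideanSpace_fin] at h1
    omega
  let e : Fin n ≃ s := (Fintype.equivFinOfCardEq hcard).symm
  have hmem : ∀ v : s, ∃ r, r ∈ T ∧ g r = (v : E) := by
    intro v
    rcases hs_sub v.2 with ⟨r, hr, hgr⟩
    exact ⟨r, hr, hgr⟩
  choose ρ hρT hρg using hmem
  set φ : Fin n → (Fin m ⊕ Fin n) := fun i => ρ (e i) with hφdef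
  have hφ : Function.Injective φ := by
    intro i1 i2 h
    have h2 : g (ρ (e i1)) = g (ρ (e i2)) := congrArg g h
    rw [hρg (e i1), hρg (e i2)] at h2
    exact e.injective (Subtype.val_injective h2)
  set Bm : Matrix (Fin n) (Fin n) ℤ := Matrix.of (fun i j => Drow A (φ i) j) with hBm
  set BmR : Matrix (Fin n) (Fin n) ℝ := Bm.map ⇑(Int.castRingHom ℝ) with hBmR
  have hrows : LinearIndependent ℝ (fun i => BmR i) := by
    have li3 : LinearIndependent ℝ (fun i : Fin n => ((e i : s) : E)) :=
      hs_li.comp (fun i => e i) e.injective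
    have li4 : LinearIndependent ℝ (fun i : Fin n => g (φ i)) := by
      have : (fun i : Fin n => g (φ i)) = fun i : Fin n => ((e i : s) : E) := by
        funext i; exact hρg (e i)
      rw [this]; exact li3
    have := li4.map' (WithLp.linearEquiv 2 ℝ (Fin n → ℝ)).toLinearMap
      (LinearEquiv.ker _)
    exact this
  have hunit : IsUnit BmR := Matrix.linearIndependent_rows_iff_isUnit.mp hrows
  have hdetR : IsUnit BmR.det := (Matrix.isUnit_iff_isUnit_det _).mp hunit
  have hdetcast : BmR.det = ((Bm.det : ℤ) : ℝ) := by
    rw [hBmR]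
    have := RingHom.map_det (Int.castRingHom ℝ) Bm
    rw [RingHom.mapMatrix_apply] at this
    rw [← this]
    simp
  have hdet0 : Bm.det ≠ 0 := by
    intro h
    rw [h] at hdetcast
    simp at hdetcast
    rw [hdetcast] at hdetR
    exact (by simpa using hdetR)
  have hdetpm := hTU n φ id hφ Function.injective_id
  have hBmid : (Matrix.of fun i j => Drow A (φ i) (id j)) = Bm := rfl
  rw [hBmid] at hdetpm
  have hdetunit : IsUnit Bm.det := by
    rcases hdetpm with h | h | h
    · exact absurd h hdet0
    · rw [h]; exact isUnit_one
    · rw [h]; exact ⟨⟨-1, -1, by norm_num, by norm_num⟩, rfl⟩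
  haveI : Invertible Bm := Bm.invertibleOfIsUnitDet hdetunit
  refine ⟨(⅟Bm).mulVec (fun i => c (φ i)), ?_⟩
  have h1 : BmR.mulVec x = fun i => (c (φ i) : ℝ) := by
    funext i
    have := hval (φ i) (hρT (e i))
    simpa [Matrix.mulVec, dotProduct, dotR, hBmR, hBm] using this
  have h2 : ((⅟Bm).map ⇑(Int.castRingHom ℝ)) * BmR = 1 := by
    rw [hBmR, ← Matrix.map_mul, invOf_mul_self]
    simp
  have h3 : x = ((⅟Bm).map ⇑(Int.castRingHom ℝ)).mulVec (BmR.mulVec x) := by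
    rw [Matrix.mulVec_mulVec, h2, Matrix.one_mulVec]
  intro j
  rw [show x j = (((⅟Bm).map ⇑(Int.castRingHom ℝ)).mulVec (BmR.mulVec x)) j from by rw [← h3]]
  rw [h1]
  simp only [Matrix.mulVec, dotProduct, Matrix.map_apply, Int.coe_castRingHom]
  push_cast
  rfl

lemma dotR_intCast (v w : Fin n → ℤ) : dotR v (fun j => (w j : ℝ)) = (dotZ v w : ℝ) := by
  simp [dotR, dotZ]

lemma dotR_unit (A : Matrix (Fin m) (Fin n) ℤ) (j : Fin n) (x : Fin n → ℝ) :
    dotR (Drow A (Sum.inr j)) x = x j := by simp [dotR, Drow]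

lemma dotZ_unit (A : Matrix (Fin m) (Fin n) ℤ) (j : Fin n) (w : Fin n → ℤ) :
    dotZ (Drow A (Sum.inr j)) w = w j := by simp [dotZ, Drow]

lemma dotR_add_mul (v : Fin n → ℤ) (x d : Fin n → ℝ) (t : ℝ) :
    dotR v (fun j => x j + t * d j) = dotR v x + t * dotR v d := by
  simp only [dotR, mul_add, Finset.sum_add_distrib, Finset.mul_sum]
  congr 1
  exact Finset.sum_congr rfl fun j _ => by ring

lemma intCase (A : Matrix (Fin m) (Fin n) ℤ) (lo hi : (Fin m ⊕ Fin n) → ℤ)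
    (x : Fin n → ℝ) (v : Fin n → ℤ) (hxv : ∀ j, x j = (v j : ℝ))
    (hfeas : ∀ r, (lo r : ℝ) ≤ dotR (Drow A r) x ∧ dotR (Drow A r) x ≤ (hi r : ℝ)) :
    (∀ r, lo r ≤ dotZ (Drow A r) v ∧ dotZ (Drow A r) v ≤ hi r) ∧
    (∀ r, dotR (Drow A r) x = (lo r : ℝ) → dotZ (Drow A r) v = lo r) ∧
    (∀ r, dotR (Drow A r) x = (hi r : ℝ) → dotZ (Drow A r) v = hi r) := by
  have key : ∀ r, dotR (Drow A r) x = ((dotZ (Drow A r) v : ℤ) : ℝ) := by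
    intro r
    rw [show x = (fun j => ((v j : ℤ) : ℝ)) from funext hxv]
    exact dotR_intCast _ _
  refine ⟨?_, ?_, ?_⟩
  · intro r
    have h := hfeas r
    rw [key r] at h
    exact ⟨by exact_mod_cast h.1, by exact_mod_cast h.2⟩
  · intro r h
    rw [key r] at h
    exact_mod_cast h
  · intro r h
    rw [key r] at h
    exact_mod_cast h

lemma intPoint (A : Matrix (Fin m) (Fin n) ℤ) (hTU : TUhyp A) :
    ∀ (N : ℕ) (lo hi : (Fin m ⊕ Fin n) → ℤ) (x : Fin n → ℝ),
    (∀ r, (lo r : ℝ) ≤ dotR (Drow A r) x ∧ dotR (Drow A r) x ≤ (hi r : ℝ)) →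
    ((Finset.univ.filter (fun r => dotR (Drow A r) x ≠ (lo r : ℝ) ∧
        dotR (Drow A r) x ≠ (hi r : ℝ))).card ≤ N) →
    ∃ v : Fin n → ℤ,
      (∀ r, lo r ≤ dotZ (Drow A r) v ∧ dotZ (Drow A r) v ≤ hi r) ∧
      (∀ r, dotR (Drow A r) x = (lo r : ℝ) → dotZ (Drow A r) v = lo r) ∧
      (∀ r, dotR (Drow A r) x = (hi r : ℝ) → dotZ (Drow A r) v = hi r) := by
  intro N
  induction N with
  | zero =>
    intro lo hi x hfeas hcard
    have hempty : (Finset.univ.filter (fun r => dotR (Drow A r) x ≠ (lo r : ℝ) ∧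
        dotR (Drow A r) x ≠ (hi r : ℝ))) = ∅ := by
      exact Finset.card_eq_zero.mp (Nat.le_zero.mp hcard)
    have hall : ∀ r, dotR (Drow A r) x = (lo r : ℝ) ∨ dotR (Drow A r) x = (hi r : ℝ) := by
      intro r
      by_contra hc
      push_neg at hc
      have : r ∈ (Finset.univ.filter (fun r => dotR (Drow A r) x ≠ (lo r : ℝ) ∧
          dotR (Drow A r) x ≠ (hi r : ℝ))) := by
        simp only [Finset.mem_filter, Finset.mem_univ, true_and]
        exact hc
      rw [hempty] at this
      exact absurd this (Finset.notMem_empty r)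
    have hint : ∀ j, ∃ vj : ℤ, x j = (vj : ℝ) := by
      intro j
      rcases hall (Sum.inr j) with h | h
      · rw [dotR_unit] at h; exact ⟨lo (Sum.inr j), h⟩
      · rw [dotR_unit] at h; exact ⟨hi (Sum.inr j), h⟩
    choose v hv using hint
    exact ⟨v, intCase A lo hi x v hv hfeas⟩
  | succ N ih =>
    intro lo hi x hfeas hcard
    by_cases hintg : ∀ j, ∃ vj : ℤ, x j = (vj : ℝ)
    · choose v hv using hintg
      exact ⟨v, intCase A lo hi x v hv hfeas⟩
    set T : Set (Fin m ⊕ Fin n) :=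
      {r | dotR (Drow A r) x = (lo r : ℝ) ∨ dotR (Drow A r) x = (hi r : ℝ)} with hT
    by_cases hker : ∀ d : Fin n → ℝ, (∀ r ∈ T, dotR (Drow A r) d = 0) → d = 0
    · obtain ⟨v, hv⟩ := integral_of_tight A hTU T x
        (fun r => if dotR (Drow A r) x = (lo r : ℝ) then lo r else hi r) hker
        (by
          intro r hr
          show dotR (Drow A r) x =
            ((if dotR (Drow A r) x = (lo r : ℝ) then lo r else hi r : ℤ) : ℝ)
          by_cases h : dotR (Drow A r) x = (lo r : ℝ)
          · rw [if_pos h]; exact h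
          · have hhi : dotR (Drow A r) x = (hi r : ℝ) := by
              rcases hr with h' | h'
              · exact absurd h' h
              · exact h'
            rw [if_neg h]; exact hhi)
      exact ⟨v, intCase A lo hi x v hv hfeas⟩
    · push_neg at hker
      obtain ⟨d, hd0, hdne⟩ := hker
      set δ : (Fin m ⊕ Fin n) → ℝ := fun r => dotR (Drow A r) d with hδ
      have hdj : ∃ j, d j ≠ 0 := by
        by_contra hc
        push_neg at hc
        exact hdne (funext fun j => hc j)
      obtain ⟨j₁, hj₁⟩ := hdj
      set S := Finset.univ.filter (fun r => δ r ≠ 0) with hS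
      have hSne : S.Nonempty := by
        refine ⟨Sum.inr j₁, ?_⟩
        simp only [hS, Finset.mem_filter, Finset.mem_univ, true_and, hδ]
        rw [dotR_unit]
        exact hj₁
      have hSstrict : ∀ r ∈ S, (lo r : ℝ) < dotR (Drow A r) x ∧ dotR (Drow A r) x < (hi r : ℝ) := by
        intro r hr
        have hδr : δ r ≠ 0 := by
          simpa [hS] using hr
        have hrT : r ∉ T := by
          intro hrT
          exact hδr (hd0 r hrT)
        have hne : dotR (Drow A r) x ≠ (lo r : ℝ) ∧ dotR (Drow A r) x ≠ (hi r : ℝ) := by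
          rw [hT] at hrT
          simp only [Set.mem_setOf_eq] at hrT
          push_neg at hrT
          exact hrT
        exact ⟨lt_of_le_of_ne (hfeas r).1 (Ne.symm hne.1), lt_of_le_of_ne (hfeas r).2 hne.2⟩
      set ratio : (Fin m ⊕ Fin n) → ℝ := fun r =>
        if 0 < δ r then ((hi r : ℝ) - dotR (Drow A r) x) / δ r
        else (dotR (Drow A r) x - (lo r : ℝ)) / (-δ r) with hratio
      have hratio_pos : ∀ r ∈ S, 0 < ratio r := by
        intro r hr
        have hδr : δ r ≠ 0 := by simpa [hS] using hr
        rcases lt_or_gt_of_ne hδr with hneg | hpos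
        · rw [hratio]
          simp only [not_lt.mpr hneg.le, if_neg (not_lt.mpr hneg.le)]
          exact div_pos (by linarith [(hSstrict r hr).1]) (by linarith)
        · rw [hratio]
          simp only [if_pos hpos]
          exact div_pos (by linarith [(hSstrict r hr).2]) hpos
      set θ := S.inf' hSne ratio with hθ
      have hθpos : 0 < θ := by
        rw [hθ, Finset.lt_inf'_iff]
        exact hratio_pos
      set x' := fun j => x j + θ * d j with hx'
      have hval' : ∀ r, dotR (Drow A r) x' = dotR (Drow A r) x + θ * δ r := by
        intro r
        rw [hx']
        exact dotR_add_mul _ _ _ _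
      have hfeas' : ∀ r, (lo r : ℝ) ≤ dotR (Drow A r) x' ∧ dotR (Drow A r) x' ≤ (hi r : ℝ) := by
        intro r
        rw [hval' r]
        rcases eq_or_ne (δ r) 0 with h0 | hne
        · rw [h0]
          simpa using hfeas r
        · have hrS : r ∈ S := by simp [hS, hne]
          have hθle : θ ≤ ratio r := Finset.inf'_le ratio hrS
          rcases lt_or_gt_of_ne hne with hneg | hpos
          · have hrr : ratio r = (dotR (Drow A r) x - (lo r : ℝ)) / (-δ r) := by
              rw [hratio]; simp [not_lt.mpr hneg.le]
            rw [hrr] at hθle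
            have h2 : θ * (-δ r) ≤ dotR (Drow A r) x - (lo r : ℝ) :=
              (le_div_iff₀ (by linarith)).mp hθle
            constructor
            · nlinarith
            · nlinarith [(hfeas r).2, hθpos, hneg]
          · have hrr : ratio r = ((hi r : ℝ) - dotR (Drow A r) x) / δ r := by
              rw [hratio]; simp [hpos]
            rw [hrr] at hθle
            have h2 : θ * δ r ≤ (hi r : ℝ) - dotR (Drow A r) x :=
              (le_div_iff₀ hpos).mp hθle
            constructor
            · nlinarith [(hfeas r).1, hθpos, hpos]
            · linarith
      have hTpres : ∀ r ∈ T, dotR (Drow A r) x' = dotR (Drow A r) x := by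
        intro r hr
        have hz : δ r = 0 := hd0 r hr
        rw [hval' r, hz]
        ring
      obtain ⟨r₀, hr₀S, hr₀⟩ := Finset.exists_mem_eq_inf' hSne ratio
      have hδr₀ : δ r₀ ≠ 0 := by simpa [hS] using hr₀S
      have hr₀tight : dotR (Drow A r₀) x' = (lo r₀ : ℝ) ∨ dotR (Drow A r₀) x' = (hi r₀ : ℝ) := by
        rw [hval' r₀]
        rcases lt_or_gt_of_ne hδr₀ with hneg | hpos
        · left
          have hrr : ratio r₀ = (dotR (Drow A r₀) x - (lo r₀ : ℝ)) / (-δ r₀) := by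
            rw [hratio]; simp [not_lt.mpr hneg.le]
          rw [hθ, hr₀, hrr]
          have hcancel : (dotR (Drow A r₀) x - (lo r₀ : ℝ)) / (-δ r₀) * δ r₀ =
              -(dotR (Drow A r₀) x - (lo r₀ : ℝ)) := by
            rw [div_mul_eq_mul_div, mul_div_assoc, div_neg, div_self hδr₀]
            ring
          linarith [hcancel]
        · right
          have hrr : ratio r₀ = ((hi r₀ : ℝ) - dotR (Drow A r₀) x) / δ r₀ := by
            rw [hratio]; simp [hpos]
          rw [hθ, hr₀, hrr, div_mul_cancel₀ _ hδr₀]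
          ring
      -- card decrease
      have hsub : (Finset.univ.filter (fun r => dotR (Drow A r) x' ≠ (lo r : ℝ) ∧
          dotR (Drow A r) x' ≠ (hi r : ℝ))) ⊆
          (Finset.univ.filter (fun r => dotR (Drow A r) x ≠ (lo r : ℝ) ∧
          dotR (Drow A r) x ≠ (hi r : ℝ))) := by
        intro r hr
        simp only [Finset.mem_filter, Finset.mem_univ, true_and] at hr ⊢
        by_contra hc
        push_neg at hc
        have hrT : r ∈ T := by
          rw [hT]
          simp only [Set.mem_setOf_eq]
          by_cases h : dotR (Drow A r) x = (lo r : ℝ)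
          · exact Or.inl h
          · exact Or.inr (hc h)
        rw [hTpres r hrT] at hr
        rw [hT] at hrT
        simp only [Set.mem_setOf_eq] at hrT
        rcases hrT with h | h
        · exact hr.1 h
        · exact hr.2 h
      have hr₀mem : r₀ ∈ (Finset.univ.filter (fun r => dotR (Drow A r) x ≠ (lo r : ℝ) ∧
          dotR (Drow A r) x ≠ (hi r : ℝ))) := by
        simp only [Finset.mem_filter, Finset.mem_univ, true_and]
        exact ⟨ne_of_gt (hSstrict r₀ hr₀S).1, ne_of_lt (hSstrict r₀ hr₀S).2⟩
      have hr₀nmem : r₀ ∉ (Finset.univ.filter (fun r => dotR (Drow A r) x' ≠ (lo r : ℝ) ∧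
          dotR (Drow A r) x' ≠ (hi r : ℝ))) := by
        simp only [Finset.mem_filter, Finset.mem_univ, true_and]
        intro hc
        rcases hr₀tight with h | h
        · exact hc.1 h
        · exact hc.2 h
      have hcard' : (Finset.univ.filter (fun r => dotR (Drow A r) x' ≠ (lo r : ℝ) ∧
          dotR (Drow A r) x' ≠ (hi r : ℝ))).card ≤ N := by
        have hlt : (Finset.univ.filter (fun r => dotR (Drow A r) x' ≠ (lo r : ℝ) ∧
            dotR (Drow A r) x' ≠ (hi r : ℝ))).card <
            (Finset.univ.filter (fun r => dotR (Drow A r) x ≠ (lo r : ℝ) ∧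
            dotR (Drow A r) x ≠ (hi r : ℝ))).card := by
          apply Finset.card_lt_card
          exact ⟨hsub, fun hss => hr₀nmem (hss hr₀mem)⟩
        omega
      obtain ⟨v, hvfeas, hvlo, hvhi⟩ := ih lo hi x' hfeas' hcard'
      refine ⟨v, hvfeas, ?_, ?_⟩
      · intro r h
        apply hvlo r
        rw [hTpres r (by rw [hT]; exact Or.inl h)]
        exact h
      · intro r h
        apply hvhi r
        rw [hTpres r (by rw [hT]; exact Or.inr h)]
        exact h


lemma dotR_sub_cast (v w : Fin n → ℤ) (x : Fin n → ℝ) :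
    dotR v (fun j => x j - (w j : ℝ)) = dotR v x - ((dotZ v w : ℤ) : ℝ) := by
  simp only [dotR, dotZ, mul_sub, Finset.sum_sub_distrib]
  push_cast
  rfl

/-- integer-coefficient linear functional on `(Fin n → ℝ) × ℝ` -/
def lfun (w : Fin n → ℤ) (β : ℤ) : ((Fin n → ℝ) × ℝ) →ₗ[ℝ] ℝ where
  toFun p := (β : ℝ) * p.2 - ∑ j, (w j : ℝ) * p.1 j
  map_add' p q := by
    simp only [Prod.fst_add, Prod.snd_add, Pi.add_apply, mul_add, Finset.sum_add_distrib]
    ring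
  map_smul' a p := by
    simp only [Prod.smul_fst, Prod.smul_snd, Pi.smul_apply, smul_eq_mul, RingHom.id_apply]
    rw [mul_sub, Finset.mul_sum]
    congr 1
    · ring
    · exact Finset.sum_congr rfl fun j _ => by ring

lemma lfun_cast (w : Fin n → ℤ) (β : ℤ) (u : Fin n → ℤ) (kk : ℤ) :
    lfun w β ((fun j => (u j : ℝ)), (kk : ℝ)) = ((β * kk - dotZ w u : ℤ) : ℝ) := by
  simp only [lfun, LinearMap.coe_mk, AddHom.coe_mk, dotZ]
  push_cast
  rfl

lemma lfun_cast_one (w : Fin n → ℤ) (β : ℤ) (u : Fin n → ℤ) :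
    lfun w β ((fun j => (u j : ℝ)), (1 : ℝ)) = ((β - dotZ w u : ℤ) : ℝ) := by
  simp only [lfun, LinearMap.coe_mk, AddHom.coe_mk, dotZ]
  push_cast
  ring

lemma dotZ_neg (w u : Fin n → ℤ) : dotZ (fun j => -(w j)) u = -dotZ w u := by
  simp [dotZ, Finset.sum_neg_distrib]

lemma mainInt (A : Matrix (Fin m) (Fin n) ℤ) (lo hi : (Fin m ⊕ Fin n) → ℤ) (x : Fin n → ℝ)
    (u : Fin n → ℤ) (hxu : ∀ j, x j = (u j : ℝ))
    (hfeas : ∀ r, (lo r : ℝ) ≤ dotR (Drow A r) x ∧ dotR (Drow A r) x ≤ (hi r : ℝ)) :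
    ∃ (s : ℕ) (v : Fin (s+1) → Fin n → ℤ) (lam : Fin (s+1) → ℝ),
      (∀ i r, lo r ≤ dotZ (Drow A r) (v i) ∧ dotZ (Drow A r) (v i) ≤ hi r) ∧
      (∀ i, 0 ≤ lam i) ∧ (∑ i, lam i) = 1 ∧
      (∀ j, x j = ∑ i, lam i * ((v i j : ℤ) : ℝ)) ∧
      LinearIndependent ℝ (fun i : Fin (s+1) =>
        (((fun j => ((v i j : ℤ) : ℝ)) : Fin n → ℝ), (1 : ℝ))) ∧
      (∀ (zz : Fin n → ℤ) (kk : ℤ),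
        (((fun j => ((zz j : ℤ) : ℝ)) : Fin n → ℝ), ((kk : ℤ) : ℝ)) ∈
          Submodule.span ℝ (Set.range (fun i : Fin (s+1) =>
            (((fun j => ((v i j : ℤ) : ℝ)) : Fin n → ℝ), (1 : ℝ)))) →
        ∃ c : Fin (s+1) → ℤ, (∀ j, zz j = ∑ i, c i * v i j) ∧ kk = ∑ i, c i) := by
  have hkey : ∀ r, dotR (Drow A r) x = ((dotZ (Drow A r) u : ℤ) : ℝ) := by
    intro r
    rw [show x = fun j => ((u j : ℤ) : ℝ) from funext hxu]
    exact dotR_intCast _ _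
  refine ⟨0, fun _ => u, fun _ => 1, ?_, fun i => zero_le_one, by simp, ?_, ?_, ?_⟩
  · intro i r
    have h := hfeas r
    rw [hkey r] at h
    exact ⟨by exact_mod_cast h.1, by exact_mod_cast h.2⟩
  · intro j
    simp [hxu j]
  · haveI : Unique (Fin (0+1)) := inferInstanceAs (Unique (Fin 1))
    refine linearIndependent_unique_iff.mpr ?_
    intro hcon
    have h2 := congrArg Prod.snd hcon
    simp at h2
  · intro zz kk hmem
    have hrange : (Set.range (fun _ : Fin 1 =>
        (((fun j => ((u j : ℤ) : ℝ)) : Fin n → ℝ), (1 : ℝ)))) =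
        {(((fun j => ((u j : ℤ) : ℝ)) : Fin n → ℝ), (1 : ℝ))} := Set.range_const
    rw [hrange, Submodule.mem_span_singleton] at hmem
    obtain ⟨a, ha⟩ := hmem
    have hsnd := congrArg Prod.snd ha
    simp only [Prod.smul_snd, smul_eq_mul, mul_one] at hsnd
    have hfst := congrArg Prod.fst ha
    refine ⟨fun _ => kk, ?_, by simp⟩
    intro j
    have h3 := congrFun hfst j
    simp only [Prod.smul_fst, Pi.smul_apply, smul_eq_mul] at h3
    rw [hsnd] at h3
    have h4 : ((kk * u j : ℤ) : ℝ) = ((zz j : ℤ) : ℝ) := by push_cast; exact h3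
    have h5 : kk * u j = zz j := by exact_mod_cast h4
    simp [Fin.sum_univ_one]
    omega

lemma mainLemma (A : Matrix (Fin m) (Fin n) ℤ) (hTU : TUhyp A) :
    ∀ (N : ℕ) (lo hi : (Fin m ⊕ Fin n) → ℤ) (x : Fin n → ℝ),
    (∀ r, (lo r : ℝ) ≤ dotR (Drow A r) x ∧ dotR (Drow A r) x ≤ (hi r : ℝ)) →
    (∀ r, hi r ≤ lo r + 1) →
    ((Finset.univ.filter (fun r => lo r < hi r)).card ≤ N) →
    ∃ (s : ℕ) (v : Fin (s+1) → Fin n → ℤ) (lam : Fin (s+1) → ℝ),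
      (∀ i r, lo r ≤ dotZ (Drow A r) (v i) ∧ dotZ (Drow A r) (v i) ≤ hi r) ∧
      (∀ i, 0 ≤ lam i) ∧ (∑ i, lam i) = 1 ∧
      (∀ j, x j = ∑ i, lam i * ((v i j : ℤ) : ℝ)) ∧
      LinearIndependent ℝ (fun i : Fin (s+1) =>
        (((fun j => ((v i j : ℤ) : ℝ)) : Fin n → ℝ), (1 : ℝ))) ∧
      (∀ (zz : Fin n → ℤ) (kk : ℤ),
        (((fun j => ((zz j : ℤ) : ℝ)) : Fin n → ℝ), ((kk : ℤ) : ℝ)) ∈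
          Submodule.span ℝ (Set.range (fun i : Fin (s+1) =>
            (((fun j => ((v i j : ℤ) : ℝ)) : Fin n → ℝ), (1 : ℝ)))) →
        ∃ c : Fin (s+1) → ℤ, (∀ j, zz j = ∑ i, c i * v i j) ∧ kk = ∑ i, c i) := by
  intro N
  induction N with
  | zero =>
    intro lo hi x hfeas hwidth hcard
    have hcoll : ∀ r, lo r = hi r := by
      intro r
      have h1 : lo r ≤ hi r := by
        have h := hfeas r
        exact_mod_cast le_trans h.1 h.2
      rcases lt_or_eq_of_le h1 with h | h
      · exfalso
        have hmem : r ∈ Finset.univ.filter (fun r => lo r < hi r) := by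
          simp [h]
        have := Finset.card_pos.mpr ⟨r, hmem⟩
        omega
      · exact h
    have hint : ∀ j, ∃ vj : ℤ, x j = (vj : ℝ) := by
      intro j
      refine ⟨lo (Sum.inr j), ?_⟩
      have h := hfeas (Sum.inr j)
      rw [dotR_unit] at h
      have h2 : ((lo (Sum.inr j) : ℤ) : ℝ) = ((hi (Sum.inr j) : ℤ) : ℝ) := by
        rw [hcoll]
      linarith [h.1, h.2]
    choose u hu using hint
    exact mainInt A lo hi x u hu hfeas
  | succ N ih =>
    intro lo hi x hfeas hwidth hcard
    by_cases hintg : ∀ j, ∃ vj : ℤ, x j = (vj : ℝ)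
    · choose u hu using hintg
      exact mainInt A lo hi x u hu hfeas
    have hlohi : ∀ r, lo r ≤ hi r := by
      intro r
      have h := hfeas r
      exact_mod_cast le_trans h.1 h.2
    obtain ⟨v₀, hv₀feas, hv₀lo, hv₀hi⟩ := intPoint A hTU (Fintype.card (Fin m ⊕ Fin n))
      lo hi x hfeas (le_trans (Finset.card_filter_le _ _) (by simp))
    set d : Fin n → ℝ := fun j => x j - (v₀ j : ℝ) with hd
    set δ : (Fin m ⊕ Fin n) → ℝ :=
      fun r => dotR (Drow A r) x - ((dotZ (Drow A r) v₀ : ℤ) : ℝ) with hδdef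
    have hδd : ∀ r, dotR (Drow A r) d = δ r := by
      intro r
      rw [hd, dotR_sub_cast]
    push_neg at hintg
    obtain ⟨j₁, hj₁⟩ := hintg
    set S := Finset.univ.filter (fun r => δ r ≠ 0) with hS
    have hSne : S.Nonempty := by
      refine ⟨Sum.inr j₁, ?_⟩
      simp only [hS, Finset.mem_filter, Finset.mem_univ, true_and, hδdef]
      rw [dotR_unit, dotZ_unit]
      exact sub_ne_zero.mpr (hj₁ (v₀ j₁))
    set ratio : (Fin m ⊕ Fin n) → ℝ := fun r =>
      if 0 < δ r then ((hi r : ℝ) - ((dotZ (Drow A r) v₀ : ℤ) : ℝ)) / δ r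
      else (((dotZ (Drow A r) v₀ : ℤ) : ℝ) - (lo r : ℝ)) / (-δ r) with hratio
    have hxval : ∀ r, dotR (Drow A r) x = ((dotZ (Drow A r) v₀ : ℤ) : ℝ) + δ r := by
      intro r
      rw [hδdef]
      ring
    have hratio1 : ∀ r ∈ S, 1 ≤ ratio r := by
      intro r hr
      have hδr : δ r ≠ 0 := by simpa [hS] using hr
      rcases lt_or_gt_of_ne hδr with hneg | hpos
      · have hrr : ratio r = (((dotZ (Drow A r) v₀ : ℤ) : ℝ) - (lo r : ℝ)) / (-δ r) := by
          rw [hratio]; simp [not_lt.mpr hneg.le]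
        rw [hrr, le_div_iff₀ (by linarith : (0:ℝ) < -δ r)]
        have h := (hfeas r).1
        rw [hxval r] at h
        linarith
      · have hrr : ratio r = ((hi r : ℝ) - ((dotZ (Drow A r) v₀ : ℤ) : ℝ)) / δ r := by
          rw [hratio]; simp [hpos]
        rw [hrr, le_div_iff₀ hpos]
        have h := (hfeas r).2
        rw [hxval r] at h
        linarith
    set θ := S.inf' hSne ratio with hθ
    have hθ1 : 1 ≤ θ := by
      rw [hθ, Finset.le_inf'_iff]
      exact hratio1
    have hθpos : 0 < θ := lt_of_lt_of_le zero_lt_one hθ1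
    set y : Fin n → ℝ := fun j => (v₀ j : ℝ) + θ * d j with hy
    have hyval : ∀ r, dotR (Drow A r) y = ((dotZ (Drow A r) v₀ : ℤ) : ℝ) + θ * δ r := by
      intro r
      rw [hy, dotR_add_mul (Drow A r) (fun j => ((v₀ j : ℤ) : ℝ)) d θ, dotR_intCast, hδd]
    have hyfeas : ∀ r, (lo r : ℝ) ≤ dotR (Drow A r) y ∧ dotR (Drow A r) y ≤ (hi r : ℝ) := by
      intro r
      rw [hyval r]
      have hfl : ((lo r : ℤ) : ℝ) ≤ ((dotZ (Drow A r) v₀ : ℤ) : ℝ) := by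
        exact_mod_cast (hv₀feas r).1
      have hfh : ((dotZ (Drow A r) v₀ : ℤ) : ℝ) ≤ ((hi r : ℤ) : ℝ) := by
        exact_mod_cast (hv₀feas r).2
      rcases eq_or_ne (δ r) 0 with h0 | hne
      · rw [h0]
        constructor <;> [linarith; linarith]
      · have hrS : r ∈ S := by simp [hS, hne]
        have hθle : θ ≤ ratio r := Finset.inf'_le ratio hrS
        rcases lt_or_gt_of_ne hne with hneg | hpos
        · have hrr : ratio r = (((dotZ (Drow A r) v₀ : ℤ) : ℝ) - (lo r : ℝ)) / (-δ r) := by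
            rw [hratio]; simp [not_lt.mpr hneg.le]
          rw [hrr] at hθle
          have h2 : θ * (-δ r) ≤ ((dotZ (Drow A r) v₀ : ℤ) : ℝ) - (lo r : ℝ) :=
            (le_div_iff₀ (by linarith)).mp hθle
          constructor
          · nlinarith
          · nlinarith
        · have hrr : ratio r = ((hi r : ℝ) - ((dotZ (Drow A r) v₀ : ℤ) : ℝ)) / δ r := by
            rw [hratio]; simp [hpos]
          rw [hrr] at hθle
          have h2 : θ * δ r ≤ (hi r : ℝ) - ((dotZ (Drow A r) v₀ : ℤ) : ℝ) :=
            (le_div_iff₀ hpos).mp hθle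
          constructor
          · nlinarith
          · linarith
    obtain ⟨r₀, hr₀S, hr₀⟩ := Finset.exists_mem_eq_inf' hSne ratio
    have hδr₀ : δ r₀ ≠ 0 := by simpa [hS] using hr₀S
    have hsides : (dotR (Drow A r₀) y = (hi r₀ : ℝ) ∧ dotZ (Drow A r₀) v₀ = hi r₀ - 1) ∨
        (dotR (Drow A r₀) y = (lo r₀ : ℝ) ∧ dotZ (Drow A r₀) v₀ = lo r₀ + 1) := by
      rcases lt_or_gt_of_ne hδr₀ with hneg | hpos
      · right
        have hrr : ratio r₀ = (((dotZ (Drow A r₀) v₀ : ℤ) : ℝ) - (lo r₀ : ℝ)) / (-δ r₀) := by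
          rw [hratio]; simp [not_lt.mpr hneg.le]
        have htval : dotR (Drow A r₀) y = (lo r₀ : ℝ) := by
          rw [hyval r₀, hθ, hr₀, hrr]
          have hcancel : (((dotZ (Drow A r₀) v₀ : ℤ) : ℝ) - (lo r₀ : ℝ)) / (-δ r₀) * δ r₀ =
              -(((dotZ (Drow A r₀) v₀ : ℤ) : ℝ) - (lo r₀ : ℝ)) := by
            rw [div_mul_eq_mul_div, mul_div_assoc, div_neg, div_self hδr₀]
            ring
          rw [hcancel]
          ring
        refine ⟨htval, ?_⟩
        have hlt : ((lo r₀ : ℤ) : ℝ) < ((dotZ (Drow A r₀) v₀ : ℤ) : ℝ) := by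
          have := hyval r₀
          rw [htval] at this
          nlinarith [mul_pos hθpos (neg_pos.mpr hneg)]
        have hlt2 : lo r₀ < dotZ (Drow A r₀) v₀ := by exact_mod_cast hlt
        have := (hv₀feas r₀).2
        have := hwidth r₀
        omega
      · left
        have hrr : ratio r₀ = ((hi r₀ : ℝ) - ((dotZ (Drow A r₀) v₀ : ℤ) : ℝ)) / δ r₀ := by
          rw [hratio]; simp [hpos]
        have htval : dotR (Drow A r₀) y = (hi r₀ : ℝ) := by
          rw [hyval r₀, hθ, hr₀, hrr, div_mul_cancel₀ _ hδr₀]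
          ring
        refine ⟨htval, ?_⟩
        have hlt : ((dotZ (Drow A r₀) v₀ : ℤ) : ℝ) < ((hi r₀ : ℤ) : ℝ) := by
          have := hyval r₀
          rw [htval] at this
          nlinarith [mul_pos hθpos hpos]
        have hlt2 : dotZ (Drow A r₀) v₀ < hi r₀ := by exact_mod_cast hlt
        have := (hv₀feas r₀).1
        have := hwidth r₀
        omega
    -- tightened bounds
    set lo' : (Fin m ⊕ Fin n) → ℤ :=
      fun r => if dotR (Drow A r) y = (hi r : ℝ) then hi r else lo r with hlo'
    set hi' : (Fin m ⊕ Fin n) → ℤ :=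
      fun r => if dotR (Drow A r) y = (lo r : ℝ) then lo r else hi r with hhi'
    have hlo'ge : ∀ r, lo r ≤ lo' r := by
      intro r
      simp only [hlo']
      by_cases h : dotR (Drow A r) y = (hi r : ℝ)
      · rw [if_pos h]; exact hlohi r
      · rw [if_neg h]
    have hhi'le : ∀ r, hi' r ≤ hi r := by
      intro r
      simp only [hhi']
      by_cases h : dotR (Drow A r) y = (lo r : ℝ)
      · rw [if_pos h]; exact hlohi r
      · rw [if_neg h]
    have hyfeas' : ∀ r, (lo' r : ℝ) ≤ dotR (Drow A r) y ∧ dotR (Drow A r) y ≤ (hi' r : ℝ) := by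
      intro r
      simp only [hlo', hhi']
      by_cases h1 : dotR (Drow A r) y = (hi r : ℝ) <;>
        by_cases h2 : dotR (Drow A r) y = (lo r : ℝ)
      · rw [if_pos h1, if_pos h2]
        exact ⟨le_of_eq h1.symm, le_of_eq h2⟩
      · rw [if_pos h1, if_neg h2]
        exact ⟨le_of_eq h1.symm, le_of_eq h1⟩
      · rw [if_neg h1, if_pos h2]
        exact ⟨le_of_eq h2.symm, le_of_eq h2⟩
      · rw [if_neg h1, if_neg h2]
        exact hyfeas r
    have hwidth' : ∀ r, hi' r ≤ lo' r + 1 := by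
      intro r
      have := hwidth r
      have := hlohi r
      have h1 := hlo'ge r
      have h2 := hhi'le r
      omega
    have hcard' : (Finset.univ.filter (fun r => lo' r < hi' r)).card ≤ N := by
      have hsub : (Finset.univ.filter (fun r => lo' r < hi' r)) ⊆
          (Finset.univ.filter (fun r => lo r < hi r)) := by
        intro r hr
        simp only [Finset.mem_filter, Finset.mem_univ, true_and] at hr ⊢
        have h1 := hlo'ge r
        have h2 := hhi'le r
        omega
      have hr₀old : r₀ ∈ (Finset.univ.filter (fun r => lo r < hi r)) := by
        simp only [Finset.mem_filter, Finset.mem_univ, true_and]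
        rcases hsides with ⟨_, h⟩ | ⟨_, h⟩
        · have := (hv₀feas r₀).1
          omega
        · have := (hv₀feas r₀).2
          omega
      have hr₀new : r₀ ∉ (Finset.univ.filter (fun r => lo' r < hi' r)) := by
        simp only [Finset.mem_filter, Finset.mem_univ, true_and]
        have hlolt : lo r₀ < hi r₀ := by
          simpa using hr₀old
        rcases hsides with ⟨hty, _⟩ | ⟨hty, _⟩
        · have hne2 : dotR (Drow A r₀) y ≠ (lo r₀ : ℝ) := by
            rw [hty]
            intro hcon
            have : hi r₀ = lo r₀ := by exact_mod_cast hcon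
            omega
          simp only [hlo', hhi']
          simp only [if_pos hty, if_neg hne2]
          omega
        · have hne2 : dotR (Drow A r₀) y ≠ (hi r₀ : ℝ) := by
            rw [hty]
            intro hcon
            have : lo r₀ = hi r₀ := by exact_mod_cast hcon
            omega
          simp only [hlo', hhi']
          simp only [if_pos hty, if_neg hne2]
          omega
      have hlt : (Finset.univ.filter (fun r => lo' r < hi' r)).card <
          (Finset.univ.filter (fun r => lo r < hi r)).card :=
        Finset.card_lt_card ⟨hsub, fun hss => hr₀new (hss hr₀old)⟩
      omega
    -- the unimodular functional
    obtain ⟨w, β, hfv₀, hftail⟩ : ∃ (w : Fin n → ℤ) (β : ℤ),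
        β - dotZ w v₀ = 1 ∧
        (∀ u : Fin n → ℤ, (∀ r, lo' r ≤ dotZ (Drow A r) u ∧ dotZ (Drow A r) u ≤ hi' r) →
          β - dotZ w u = 0) := by
      rcases hsides with ⟨hty, hv⟩ | ⟨hty, hv⟩
      · refine ⟨Drow A r₀, hi r₀, by omega, ?_⟩
        intro u hu
        have h1 := (hu r₀).1
        have h2 := (hu r₀).2
        simp only [hlo'] at h1
        simp only [hhi'] at h2
        have hlolt : lo r₀ < hi r₀ := by
          have := (hv₀feas r₀).1
          have := hwidth r₀
          omega
        have hne2 : dotR (Drow A r₀) y ≠ (lo r₀ : ℝ) := by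
          rw [hty]
          intro hcon
          have : hi r₀ = lo r₀ := by exact_mod_cast hcon
          omega
        rw [if_pos hty] at h1
        rw [if_neg hne2] at h2
        omega
      · refine ⟨fun j => -(Drow A r₀ j), -(lo r₀), by rw [dotZ_neg]; omega, ?_⟩
        intro u hu
        have h1 := (hu r₀).1
        have h2 := (hu r₀).2
        simp only [hlo'] at h1
        simp only [hhi'] at h2
        have hlolt : lo r₀ < hi r₀ := by
          have := (hv₀feas r₀).2
          have := hwidth r₀
          omega
        have hne2 : dotR (Drow A r₀) y ≠ (hi r₀ : ℝ) := by
          rw [hty]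
          intro hcon
          have : lo r₀ = hi r₀ := by exact_mod_cast hcon
          omega
        rw [if_neg hne2] at h1
        rw [if_pos hty] at h2
        rw [dotZ_neg]
        omega
    obtain ⟨s', v', lam', hfeas'', hlam0, hlamsum, hycoord, hli', hlat'⟩ :=
      ih lo' hi' y hyfeas' hwidth' hcard'
    -- kernel fact for the functional
    have hker : Submodule.span ℝ (Set.range (fun i : Fin (s'+1) =>
        (((fun j => ((v' i j : ℤ) : ℝ)) : Fin n → ℝ), (1 : ℝ)))) ≤
        LinearMap.ker (lfun w β) := by
      rw [Submodule.span_le]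
      rintro p ⟨i, rfl⟩
      simp only [SetLike.mem_coe, LinearMap.mem_ker]
      rw [lfun_cast_one, hftail (v' i) (fun r => hfeas'' i r)]
      simp
    have hfam : (fun i : Fin (s'+1+1) =>
        (((fun j => (((Fin.cons v₀ v' : Fin (s'+1+1) → Fin n → ℤ) i j : ℤ) : ℝ)) : Fin n → ℝ),
          (1 : ℝ))) =
        Fin.cons (((fun j => ((v₀ j : ℤ) : ℝ)) : Fin n → ℝ), (1 : ℝ))
          (fun i : Fin (s'+1) =>
            (((fun j => ((v' i j : ℤ) : ℝ)) : Fin n → ℝ), (1 : ℝ))) := by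
      funext i
      refine Fin.cases ?_ ?_ i
      · simp
      · intro i'
        simp
    refine ⟨s'+1, Fin.cons v₀ v', Fin.cons (1 - 1/θ) (fun i => lam' i / θ),
      ?_, ?_, ?_, ?_, ?_, ?_⟩
    · intro i r
      refine Fin.cases ?_ ?_ i
      · rw [Fin.cons_zero]
        exact hv₀feas r
      · intro i'
        rw [Fin.cons_succ]
        exact ⟨le_trans (hlo'ge r) (hfeas'' i' r).1, le_trans (hfeas'' i' r).2 (hhi'le r)⟩
    · intro i
      refine Fin.cases ?_ ?_ i
      · rw [Fin.cons_zero]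
        have : 1/θ ≤ 1 := by
          rw [div_le_one hθpos]
          exact hθ1
        linarith
      · intro i'
        rw [Fin.cons_succ]
        exact div_nonneg (hlam0 i') hθpos.le
    · rw [Fin.sum_univ_succ]
      simp only [Fin.cons_zero, Fin.cons_succ]
      rw [← Finset.sum_div, hlamsum]
      field_simp
      ring
    · intro j
      rw [Fin.sum_univ_succ]
      simp only [Fin.cons_zero, Fin.cons_succ]
      have h1 : y j = (v₀ j : ℝ) + θ * (x j - (v₀ j : ℝ)) := by
        rw [hy]
      have h2 : ∑ i : Fin (s'+1), lam' i / θ * ((v' i j : ℤ) : ℝ) =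
          (∑ i : Fin (s'+1), lam' i * ((v' i j : ℤ) : ℝ)) / θ := by
        rw [Finset.sum_div]
        exact Finset.sum_congr rfl fun i _ => by ring
      rw [h2, ← hycoord j, h1]
      field_simp
      ring
    · rw [hfam, linearIndependent_fin_cons]
      refine ⟨hli', ?_⟩
      intro hmem
      have h1 := hker hmem
      rw [LinearMap.mem_ker, lfun_cast_one, hfv₀] at h1
      simp at h1
    · intro zz kk hmem
      rw [hfam, Fin.range_cons] at hmem
      obtain ⟨a, p, hp, hu⟩ := Submodule.mem_span_insert.mp hmem
      have hpker : lfun w β p = 0 := hker hp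
      have ha : a = ((β * kk - dotZ w zz : ℤ) : ℝ) := by
        have h3 := congrArg (lfun w β) hu
        rw [lfun_cast, map_add, _root_.map_smul, lfun_cast_one, hfv₀, hpker] at h3
        simpa using h3.symm
      set c₀ : ℤ := β * kk - dotZ w zz with hc₀
      have hp' : p = (((fun j => ((zz j - c₀ * v₀ j : ℤ) : ℝ)) : Fin n → ℝ),
          ((kk - c₀ : ℤ) : ℝ)) := by
        have hprd : p = (((fun j => ((zz j : ℤ) : ℝ)) : Fin n → ℝ), ((kk : ℤ) : ℝ)) -
            a • (((fun j => ((v₀ j : ℤ) : ℝ)) : Fin n → ℝ), (1 : ℝ)) := by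
          rw [hu]
          abel
        rw [hprd, ha]
        refine Prod.ext ?_ ?_
        · funext j
          simp only [Prod.fst_sub, Prod.smul_fst, Pi.sub_apply, Pi.smul_apply, smul_eq_mul]
          push_cast
          ring
        · simp only [Prod.snd_sub, Prod.smul_snd, smul_eq_mul, mul_one]
          push_cast
          ring
      rw [hp'] at hp
      obtain ⟨c', hc'1, hc'2⟩ := hlat' (fun j => zz j - c₀ * v₀ j) (kk - c₀) hp
      refine ⟨Fin.cons c₀ c', ?_, ?_⟩
      · intro j
        rw [Fin.sum_univ_succ]
        simp only [Fin.cons_zero, Fin.cons_succ]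
        have := hc'1 j
        linarith
      · rw [Fin.sum_univ_succ]
        simp only [Fin.cons_zero, Fin.cons_succ]
        linarith [hc'2]

end
end GRaux

open GRaux Finset

/-- sign-consistent integer Carathéodory property for polyhedra
defined by a totally unimodular matrix (Proposition on the Gijswijt–Regts
theorem, sharpened form). -/
theorem stmt_0 {m n : ℕ} (A : Matrix (Fin m) (Fin n) ℤ)
    (hTU : ∀ (r : ℕ) (φ : Fin r → Fin m) (ψ : Fin r → Fin n),
      Function.Injective φ → Function.Injective ψ →
      (A.submatrix φ ψ).det = 0 ∨ (A.submatrix φ ψ).det = 1 ∨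
        (A.submatrix φ ψ).det = -1)
    (b : Fin m → ℤ)
    (hQ : ∃ x : Fin n → ℝ, ∀ i : Fin m, ∑ j, (A i j : ℝ) * x j ≤ (b i : ℝ))
    (k : ℕ) (hk : 0 < k) (zstar : Fin n → ℤ)
    (hzstar : ∀ i : Fin m, ∑ j, A i j * zstar j ≤ (k : ℤ) * b i) :
    ∃ (t : ℕ) (z : Fin t → Fin n → ℤ) (μ : Fin t → ℕ),
      1 ≤ t ∧
      AffineIndependent ℝ (fun i : Fin t => fun j => (z i j : ℝ)) ∧
      (∀ i : Fin t, ∀ r : Fin m, ∑ j, A r j * z i j ≤ b r) ∧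
      (∀ i, 0 < μ i) ∧ (∑ i, μ i) = k ∧
      (∀ j, zstar j = ∑ i, (μ i : ℤ) * z i j) ∧
      (∀ i j, (0 ≤ zstar j → 0 ≤ z i j) ∧ (zstar j ≤ 0 → z i j ≤ 0)) := by
  classical
  have hTU' : TUhyp A := tuhyp_of_hTU A hTU
  have hkR : (0:ℝ) < (k:ℝ) := by exact_mod_cast hk
  set x₀ : Fin n → ℝ := fun j => (zstar j : ℝ) / k with hx₀
  set lo : (Fin m ⊕ Fin n) → ℤ := fun r => ⌊dotR (Drow A r) x₀⌋ with hlo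
  set hi : (Fin m ⊕ Fin n) → ℤ := fun r => ⌈dotR (Drow A r) x₀⌉ with hhi
  have hfeas : ∀ r, (lo r : ℝ) ≤ dotR (Drow A r) x₀ ∧ dotR (Drow A r) x₀ ≤ (hi r : ℝ) := by
    intro r
    exact ⟨Int.floor_le _, Int.le_ceil _⟩
  have hwidth : ∀ r, hi r ≤ lo r + 1 := by
    intro r
    exact Int.ceil_le_floor_add_one _
  obtain ⟨s, v, lam, hvfeas, hlam0, hlamsum, hxcoord, hli, hlat⟩ :=
    mainLemma A hTU' ((Finset.univ.filter (fun r => lo r < hi r)).card) lo hi x₀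
      hfeas hwidth le_rfl
  -- bounds transfer to the original system
  have hAval : ∀ r : Fin m, dotR (Drow A (Sum.inl r)) x₀ =
      ((∑ j, A r j * zstar j : ℤ) : ℝ) / k := by
    intro r
    rw [hx₀]
    simp only [dotR, Drow, Sum.elim_inl]
    push_cast
    rw [Finset.sum_div]
    exact Finset.sum_congr rfl fun j _ => by ring
  have hhiA : ∀ r : Fin m, hi (Sum.inl r) ≤ b r := by
    intro r
    rw [hhi]
    apply Int.ceil_le.mpr
    rw [hAval r]
    rw [div_le_iff₀ hkR]
    have := hzstar r
    have hcast : ((∑ j, A r j * zstar j : ℤ) : ℝ) ≤ (((k : ℤ) * b r : ℤ) : ℝ) := by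
      exact_mod_cast this
    push_cast at hcast ⊢
    linarith
  have hfeasA : ∀ i r, ∑ j, A r j * v i j ≤ b r := by
    intro i r
    have h1 : dotZ (Drow A (Sum.inl r)) (v i) ≤ hi (Sum.inl r) := (hvfeas i (Sum.inl r)).2
    have h2 : dotZ (Drow A (Sum.inl r)) (v i) = ∑ j, A r j * v i j := by
      simp [dotZ, Drow]
    rw [h2] at h1
    exact le_trans h1 (hhiA r)
  -- sign conditions
  have hsign : ∀ i j, (0 ≤ zstar j → 0 ≤ v i j) ∧ (zstar j ≤ 0 → v i j ≤ 0) := by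
    intro i j
    have h1 := hvfeas i (Sum.inr j)
    have h2 : dotZ (Drow A (Sum.inr j)) (v i) = v i j := dotZ_unit A j (v i)
    rw [h2] at h1
    have hx0j : dotR (Drow A (Sum.inr j)) x₀ = (zstar j : ℝ) / k := by
      rw [dotR_unit, hx₀]
    constructor
    · intro hz
      have hfl : 0 ≤ lo (Sum.inr j) := by
        rw [hlo]
        apply Int.le_floor.mpr
        rw [hx0j]
        simp only [Int.cast_zero]
        exact div_nonneg (by exact_mod_cast hz) hkR.le
      linarith [h1.1]
    · intro hz
      have hcl : hi (Sum.inr j) ≤ 0 := by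
        rw [hhi]
        apply Int.ceil_le.mpr
        rw [hx0j]
        simp only [Int.cast_zero]
        exact div_nonpos_of_nonpos_of_nonneg (by exact_mod_cast hz) hkR.le
      linarith [h1.2]
  -- lattice membership of (zstar, k)
  set W : Fin (s+1) → (Fin n → ℝ) × ℝ := fun i => ((fun j => ((v i j : ℤ) : ℝ)), (1:ℝ)) with hWdef
  have hx0pair : (((fun j => x₀ j) : Fin n → ℝ), (1:ℝ)) = ∑ i, lam i • W i := by
    refine Prod.ext ?_ ?_
    · rw [Prod.fst_sum]
      funext j
      rw [Finset.sum_apply]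
      simp only [hWdef, Prod.smul_fst, Pi.smul_apply, smul_eq_mul]
      exact hxcoord j
    · rw [Prod.snd_sum]
      simp only [hWdef, Prod.smul_snd, smul_eq_mul, mul_one]
      exact hlamsum.symm
  have hmemb : (((fun j => ((zstar j : ℤ) : ℝ)) : Fin n → ℝ), ((k : ℤ) : ℝ)) ∈
      Submodule.span ℝ (Set.range W) := by
    have hsm : (((fun j => ((zstar j : ℤ) : ℝ)) : Fin n → ℝ), ((k : ℤ) : ℝ)) =
        (k : ℝ) • (((fun j => x₀ j) : Fin n → ℝ), (1:ℝ)) := by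
      refine Prod.ext ?_ ?_
      · funext j
        simp only [Prod.smul_fst, Pi.smul_apply, smul_eq_mul, hx₀]
        field_simp
      · simp only [Prod.smul_snd, smul_eq_mul, mul_one]
        push_cast
        rfl
    rw [hsm, hx0pair]
    exact Submodule.smul_mem _ _ (Submodule.sum_mem _ fun i _ =>
      Submodule.smul_mem _ _ (Submodule.subset_span (Set.mem_range_self i)))
  obtain ⟨c, hc1, hc2⟩ := hlat zstar (k : ℤ) hmemb
  -- identify c with k • lam
  have hceq : ∀ i, (c i : ℝ) = (k : ℝ) * lam i := by
    have hsum1 : ∑ i, (c i : ℝ) • W i =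
        (((fun j => ((zstar j : ℤ) : ℝ)) : Fin n → ℝ), ((k : ℤ) : ℝ)) := by
      refine Prod.ext ?_ ?_
      · rw [Prod.fst_sum]
        funext j
        rw [Finset.sum_apply]
        simp only [hWdef, Prod.smul_fst, Pi.smul_apply, smul_eq_mul]
        have := hc1 j
        have hcast : ((zstar j : ℤ) : ℝ) = ((∑ i, c i * v i j : ℤ) : ℝ) := by
          exact_mod_cast congrArg (fun z : ℤ => (z : ℝ)) this
        rw [hcast]
        push_cast
        rfl
      · rw [Prod.snd_sum]
        simp only [hWdef, Prod.smul_snd, smul_eq_mul, mul_one]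
        exact_mod_cast hc2.symm
    have hsum2 : ∑ i, ((k : ℝ) * lam i) • W i =
        (((fun j => ((zstar j : ℤ) : ℝ)) : Fin n → ℝ), ((k : ℤ) : ℝ)) := by
      have : ∑ i, ((k : ℝ) * lam i) • W i = (k : ℝ) • ∑ i, lam i • W i := by
        rw [Finset.smul_sum]
        exact Finset.sum_congr rfl fun i _ => by rw [smul_smul]
      rw [this, ← hx0pair]
      refine Prod.ext ?_ ?_
      · funext j
        simp only [Prod.smul_fst, Pi.smul_apply, smul_eq_mul, hx₀]
        field_simp
      · simp only [Prod.smul_snd, smul_eq_mul, mul_one]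
        push_cast
        rfl
    have hzero : ∑ i, ((c i : ℝ) - (k : ℝ) * lam i) • W i = 0 := by
      simp only [sub_smul]
      rw [Finset.sum_sub_distrib, hsum1, hsum2]
      simp
    intro i
    have hz2 := linearIndependent_iff'.mp hli Finset.univ
      (fun i => (c i : ℝ) - (k : ℝ) * lam i) hzero i (Finset.mem_univ i)
    simp only [sub_eq_zero] at hz2
    exact hz2
  have hcnn : ∀ i, 0 ≤ c i := by
    intro i
    have h1 : (0:ℝ) ≤ (c i : ℝ) := by
      rw [hceq i]
      exact mul_nonneg hkR.le (hlam0 i)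
    exact_mod_cast h1
  -- restrict to the support of c
  set T : Finset (Fin (s+1)) := Finset.univ.filter (fun i => 0 < c i) with hT
  have hTne : T.Nonempty := by
    by_contra hc
    rw [Finset.not_nonempty_iff_eq_empty] at hc
    have hall0 : ∀ i, c i = 0 := by
      intro i
      by_contra hne
      have : i ∈ T := by
        simp only [hT, Finset.mem_filter, Finset.mem_univ, true_and]
        rcases lt_or_eq_of_le (hcnn i) with h | h
        · exact h
        · exact absurd h.symm hne
      rw [hc] at this
      exact absurd this (Finset.notMem_empty i)
    have : (k : ℤ) = 0 := by
      rw [hc2]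
      exact Finset.sum_eq_zero fun i _ => hall0 i
    omega
  haveI : Nonempty ↥T := hTne.to_subtype
  set t : ℕ := Fintype.card ↥T with ht
  set e : ↥T ≃ Fin t := Fintype.equivFin ↥T with he
  set emb : Fin t → Fin (s+1) := fun i => ((e.symm i : ↥T) : Fin (s+1)) with hemb
  have hembinj : Function.Injective emb := by
    intro i1 i2 h
    exact e.symm.injective (Subtype.val_injective h)
  have hsumT : ∀ (f : Fin (s+1) → ℤ), ∑ i : Fin t, f (emb i) = ∑ i ∈ T, f i := by
    intro f
    simp only [hemb]
    rw [Equiv.sum_comp e.symm (fun x : ↥T => f ↑x)]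
    exact Finset.sum_coe_sort T f
  refine ⟨t, fun i => v (emb i), fun i => (c (emb i)).toNat, ?_, ?_, ?_, ?_, ?_, ?_, ?_⟩
  · rw [ht]
    exact Fintype.card_pos
  · -- affine independence
    have haff : AffineIndependent ℝ (fun i : Fin (s+1) => ((fun j => ((v i j : ℤ) : ℝ)) : Fin n → ℝ)) := by
      rw [affineIndependent_iff]
      intro sfin wt hsum hcomb
      have hzero : ∑ i ∈ sfin, wt i • W i = 0 := by
        refine Prod.ext ?_ ?_
        · rw [Prod.fst_sum]
          simp only [hWdef, Prod.smul_fst]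
          exact hcomb
        · rw [Prod.snd_sum]
          simp only [hWdef, Prod.smul_snd, smul_eq_mul, mul_one]
          simpa using hsum
      exact fun i hi => linearIndependent_iff'.mp hli sfin wt hzero i hi
    exact haff.comp_embedding ⟨emb, hembinj⟩
  · intro i r
    exact hfeasA (emb i) r
  · intro i
    have hmemT : emb i ∈ T := (e.symm i).2
    simp only [hT, Finset.mem_filter, Finset.mem_univ, true_and] at hmemT
    exact Int.lt_toNat.mpr (by exact_mod_cast hmemT)
  · -- sum of weights
    have h1 : ∑ i : Fin t, ((c (emb i)).toNat : ℤ) = ∑ i : Fin t, c (emb i) := by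
      refine Finset.sum_congr rfl fun i _ => ?_
      exact Int.toNat_of_nonneg (hcnn (emb i))
    have h2 : ∑ i : Fin t, c (emb i) = ∑ i ∈ T, c i := hsumT c
    have h3 : ∑ i ∈ T, c i = ∑ i, c i := by
      refine Finset.sum_subset (Finset.subset_univ T) fun i _ hni => ?_
      simp only [hT, Finset.mem_filter, Finset.mem_univ, true_and] at hni
      have := hcnn i
      omega
    have h4 : ∑ i : Fin t, ((c (emb i)).toNat : ℤ) = (k : ℤ) := by
      rw [h1, h2, h3, ← hc2]
    have h5 : ((∑ i : Fin t, (c (emb i)).toNat : ℕ) : ℤ) = (k : ℤ) := by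
      push_cast
      exact h4
    exact_mod_cast h5
  · -- decomposition identity
    intro j
    have h1 : ∑ i : Fin t, ((c (emb i)).toNat : ℤ) * v (emb i) j =
        ∑ i : Fin t, c (emb i) * v (emb i) j := by
      refine Finset.sum_congr rfl fun i _ => ?_
      rw [Int.toNat_of_nonneg (hcnn (emb i))]
    have h2 : ∑ i : Fin t, c (emb i) * v (emb i) j = ∑ i ∈ T, c i * v i j :=
      hsumT (fun i => c i * v i j)
    have h3 : ∑ i ∈ T, c i * v i j = ∑ i, c i * v i j := by
      refine Finset.sum_subset (Finset.subset_univ T) fun i _ hni => ?_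
      simp only [hT, Finset.mem_filter, Finset.mem_univ, true_and] at hni
      have := hcnn i
      have : c i = 0 := by omega
      rw [this]
      ring
    rw [h1, h2, h3, ← hc1 j]
  · intro i j
    exact hsign (emb i) j
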